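/- Let μ be a finite Borel measure on ℝ^d satisfying the Frostman condition μ(B(x,r)) ≤ C r^s for all x and 0 < r ≤ 1, with s > d/2, and with compact support. Then for any compact interval I ⊂ (0,∞) and t ≥ 1, ∫_{x : |x| ∈ tI} |μ̂(x)|² dx ≲ t^{d-s}, with implicit constant depending on C, d, s, and I. -/

import Mathlib

open MeasureTheory RealInnerProductSpace

noncomputable def ftMeasure {d : ℕ} (μ : Measure (EuclideanSpace ℝ (Fin d)))
    (ξ : EuclideanSpace ℝ (Fin d)) : ℂ :=
  ∫ x, Complex.exp (-2 * Real.pi * Complex.I * (⟪x, ξ⟫ : ℝ)) ∂μ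

lemma aux_norm_exp (u : ℝ) : ‖Complex.exp (-2 * Real.pi * Complex.I * (u:ℂ))‖ = 1 := by
  have h : (-2 * (Real.pi:ℂ) * Complex.I * (u:ℂ)) = ((-2*Real.pi*u : ℝ) : ℂ) * Complex.I := by
    push_cast; ring
  rw [h, Complex.norm_exp_ofReal_mul_I]

lemma aux_key {d : ℕ} (μ : Measure (EuclideanSpace ℝ (Fin d))) [IsFiniteMeasure μ]
    (T : ℝ) (hT0 : 0 < T) :
    ∫ x : EuclideanSpace ℝ (Fin d), Real.exp (-(Real.pi/T^2) * ‖x‖^2) * ‖ftMeasure μ x‖^2 =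
      T ^ ((d:ℝ)) * ∫ p : EuclideanSpace ℝ (Fin d) × EuclideanSpace ℝ (Fin d),
        Real.exp (-(Real.pi*T^2) * ‖p.1 - p.2‖^2) ∂(μ.prod μ) := by
  set b : ℝ := Real.pi / T^2 with hbdef
  have hb0 : 0 < b := by positivity
  have hbc : (0:ℝ) < ((b:ℂ)).re := by simpa using hb0
  set g : EuclideanSpace ℝ (Fin d) → ℝ := fun x => Real.exp (-b * ‖x‖^2) with hgdef
  set Ψ : EuclideanSpace ℝ (Fin d) → EuclideanSpace ℝ (Fin d) × EuclideanSpace ℝ (Fin d) → ℂ :=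
    fun x p => (g x : ℂ) *
      Complex.exp (-2 * Real.pi * Complex.I * ((⟪p.1 - p.2, x⟫ : ℝ) : ℂ)) with hΨdef
  have hg_cont : Continuous g := by
    exact Real.continuous_exp.comp (continuous_const.mul ((continuous_norm).pow 2))
  have hg_int : Integrable g (volume : Measure (EuclideanSpace ℝ (Fin d))) := by
    have h := (GaussianFourier.integrable_cexp_neg_mul_sq_norm_add (V := EuclideanSpace ℝ (Fin d))
      (b := (b:ℂ)) hbc 0 0).norm
    refine h.congr (Filter.Eventually.of_forall fun v => ?_)
    have h1 : (-(b:ℂ) * (‖v‖:ℂ)^2 + 0 * ((⟪(0 : EuclideanSpace ℝ (Fin d)), v⟫ : ℝ) : ℂ))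
        = ((-b * ‖v‖^2 : ℝ) : ℂ) := by push_cast; ring
    show ‖Complex.exp (-(b:ℂ) * (‖v‖:ℂ)^2 + 0 * ((⟪(0 : EuclideanSpace ℝ (Fin d)), v⟫ : ℝ) : ℂ))‖ = g v
    rw [h1, Complex.norm_exp_ofReal]
  -- pointwise identity: weighted square as a double integral
  have hA : ∀ x, (g x : ℂ) * (ftMeasure μ x * (starRingEnd ℂ) (ftMeasure μ x)) =
      ∫ p, Ψ x p ∂(μ.prod μ) := by
    intro x
    have hconj : (starRingEnd ℂ) (ftMeasure μ x) =
        ∫ z, Complex.exp (2 * Real.pi * Complex.I * ((⟪z, x⟫ : ℝ) : ℂ)) ∂μ := by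
      rw [ftMeasure, ← integral_conj]
      congr 1; funext z
      rw [← Complex.exp_conj]
      congr 1
      simp only [map_mul, map_neg, map_ofNat, Complex.conj_I, Complex.conj_ofReal]
      ring
    rw [hconj, ftMeasure, ← integral_prod_mul, ← integral_const_mul]
    congr 1; funext p
    rw [← Complex.exp_add]
    simp only [hΨdef]
    congr 2
    push_cast [inner_sub_left]
    ring
  -- integrability on the product
  have hΨnorm : ∀ q : EuclideanSpace ℝ (Fin d) × (EuclideanSpace ℝ (Fin d) × EuclideanSpace ℝ (Fin d)),
      ‖Ψ q.1 q.2‖ = g q.1 := by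
    intro q
    rw [hΨdef]
    simp only [norm_mul, Complex.norm_real, Real.norm_eq_abs]
    rw [aux_norm_exp, abs_of_pos (Real.exp_pos _), mul_one]
  have hΨcont : Continuous (Function.uncurry Ψ) := by
    rw [hΨdef]
    apply Continuous.mul
    · exact Complex.continuous_ofReal.comp (hg_cont.comp continuous_fst)
    · apply Complex.continuous_exp.comp
      apply Continuous.mul continuous_const
      apply Complex.continuous_ofReal.comp
      exact Continuous.inner
        ((continuous_fst.comp continuous_snd).sub (continuous_snd.comp continuous_snd))
        continuous_fst
  have hInt : Integrable (Function.uncurry Ψ) ((volume : Measure (EuclideanSpace ℝ (Fin d))).prod (μ.prod μ)) := by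
    have hbd : Integrable (fun q : EuclideanSpace ℝ (Fin d) × (EuclideanSpace ℝ (Fin d) × EuclideanSpace ℝ (Fin d)) => g q.1)
        ((volume : Measure (EuclideanSpace ℝ (Fin d))).prod (μ.prod μ)) := by
      have := hg_int.mul_prod (integrable_const (1:ℝ) (μ := μ.prod μ))
      simpa using this
    refine hbd.mono' hΨcont.aestronglyMeasurable (Filter.Eventually.of_forall fun q => ?_)
    exact le_of_eq (hΨnorm q)
  -- the inner Gaussian integral
  have hinner : ∀ p : EuclideanSpace ℝ (Fin d) × EuclideanSpace ℝ (Fin d),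
      ∫ x, Ψ x p = ((T ^ ((d:ℝ)) * Real.exp (-(Real.pi*T^2) * ‖p.1 - p.2‖^2) : ℝ) : ℂ) := by
    intro p
    have h1 : ∀ x, Ψ x p = Complex.exp (-(b:ℂ) * (‖x‖:ℂ)^2 +
        (-2 * Real.pi * Complex.I) * ((⟪p.1 - p.2, x⟫ : ℝ) : ℂ)) := by
      intro x
      rw [hΨdef]
      simp only
      rw [show ((g x : ℝ):ℂ) = Complex.exp (((-b * ‖x‖^2 : ℝ)):ℂ) by
        rw [hgdef]; push_cast [Complex.ofReal_exp]; ring_nf]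
      rw [← Complex.exp_add]
      congr 1
      push_cast; ring
    have h2 : ∫ x, Ψ x p = ∫ x : EuclideanSpace ℝ (Fin d), Complex.exp (-(b:ℂ) * (‖x‖:ℂ)^2 +
        (-2 * Real.pi * Complex.I) * ((⟪p.1 - p.2, x⟫ : ℝ) : ℂ)) := by
      congr 1; funext x; exact h1 x
    rw [h2, GaussianFourier.integral_cexp_neg_mul_sq_norm_add hbc (-2 * Real.pi * Complex.I) (p.1 - p.2)]
    have hπ : (Real.pi:ℂ) ≠ 0 := by exact_mod_cast Real.pi_ne_zero
    have hTc : (T:ℂ) ≠ 0 := by exact_mod_cast hT0.ne'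
    have e1 : ((Real.pi:ℂ)/(b:ℂ)) = ((T^2 : ℝ) : ℂ) := by
      rw [hbdef]; push_cast; field_simp
    have e2 : ((Module.finrank ℝ (EuclideanSpace ℝ (Fin d)) : ℂ)/2) = (((d:ℝ)/2 : ℝ) : ℂ) := by
      rw [finrank_euclideanSpace_fin]; push_cast; ring
    rw [e1, e2, ← Complex.ofReal_cpow (by positivity : (0:ℝ) ≤ T^2)]
    have e3 : (T^2:ℝ) ^ ((d:ℝ)/2) = T ^ ((d:ℝ)) := by
      rw [← Real.rpow_natCast T 2, ← Real.rpow_mul hT0.le]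
      congr 1
      ring
    have e4 : (-2 * (Real.pi:ℂ) * Complex.I)^2 * ((‖p.1 - p.2‖:ℝ):ℂ)^2/(4*(b:ℂ)) =
        ((-(Real.pi*T^2) * ‖p.1 - p.2‖^2 : ℝ) : ℂ) := by
      rw [hbdef]
      push_cast
      field_simp
      ring_nf
      rw [Complex.I_sq]
      ring
    rw [e3, e4, ← Complex.ofReal_exp, ← Complex.ofReal_mul]
  -- assemble
  have h5 : (∫ x, (g x:ℂ) * (ftMeasure μ x * (starRingEnd ℂ) (ftMeasure μ x))) =
      ((∫ x, g x * ‖ftMeasure μ x‖^2 : ℝ) : ℂ) := by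
    calc (∫ x, (g x:ℂ) * (ftMeasure μ x * (starRingEnd ℂ) (ftMeasure μ x)))
        = ∫ x, ((g x * ‖ftMeasure μ x‖^2 : ℝ) : ℂ) := by
          congr 1; funext x
          rw [Complex.mul_conj, Complex.normSq_eq_norm_sq]
          push_cast; ring
      _ = _ := integral_ofReal
  have h6 : (∫ x, (g x:ℂ) * (ftMeasure μ x * (starRingEnd ℂ) (ftMeasure μ x))) =
      ((T ^ ((d:ℝ)) * ∫ p, Real.exp (-(Real.pi*T^2) * ‖p.1 - p.2‖^2) ∂(μ.prod μ) : ℝ) : ℂ) := by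
    calc (∫ x, (g x:ℂ) * (ftMeasure μ x * (starRingEnd ℂ) (ftMeasure μ x)))
        = ∫ x, ∫ p, Ψ x p ∂(μ.prod μ) := by congr 1; funext x; exact hA x
      _ = ∫ p, (∫ x, Ψ x p) ∂(μ.prod μ) := integral_integral_swap hInt
      _ = ∫ p : EuclideanSpace ℝ (Fin d) × EuclideanSpace ℝ (Fin d),
            ((T ^ ((d:ℝ)) * Real.exp (-(Real.pi*T^2) * ‖p.1 - p.2‖^2) : ℝ) : ℂ) ∂(μ.prod μ) := by
          congr 1; funext p; exact hinner p
      _ = ((∫ p, T ^ ((d:ℝ)) * Real.exp (-(Real.pi*T^2) * ‖p.1 - p.2‖^2) ∂(μ.prod μ) : ℝ) : ℂ) :=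
          integral_ofReal
      _ = _ := by rw [integral_const_mul]
  have := h5.symm.trans h6
  exact_mod_cast this

lemma aux_summable (s : ℝ) (hs : 0 ≤ s) :
    Summable (fun k : ℕ => Real.exp (-Real.pi * (k:ℝ)^2) * ((k:ℝ)+1)^s) := by
  set q := Real.exp (-Real.pi) with hq
  have hq0 : 0 < q := Real.exp_pos _
  have hq1 : q < 1 := by
    rw [hq]; exact Real.exp_lt_one_iff.mpr (neg_lt_zero.mpr Real.pi_pos)
  set n := ⌈s⌉₊ with hn
  have h1 : Summable (fun k : ℕ => ((k:ℝ))^n * q^k) :=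
    summable_pow_mul_geometric_of_norm_lt_one n (by rwa [Real.norm_eq_abs, abs_of_pos hq0])
  have h2 : Summable (fun k : ℕ => (((k:ℕ):ℝ)+1)^n * q^(k+1)) := by
    have := (summable_nat_add_iff 1).2 h1
    refine this.congr fun k => ?_
    push_cast; ring
  have h3 : Summable (fun k : ℕ => (((k:ℕ):ℝ)+1)^n * q^k) := by
    refine (h2.mul_left q⁻¹).congr fun k => ?_
    rw [pow_succ]
    field_simp
  refine h3.of_nonneg_of_le (fun k => by positivity) (fun k => ?_)
  have hk1 : (1:ℝ) ≤ (k:ℝ)+1 := by have := Nat.cast_nonneg (α := ℝ) k; linarith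
  have e1 : Real.exp (-Real.pi * (k:ℝ)^2) ≤ q^k := by
    have : -Real.pi * (k:ℝ)^2 = ((k^2 : ℕ):ℝ) * (-Real.pi) := by push_cast; ring
    rw [this, Real.exp_nat_mul, ← hq]
    exact pow_le_pow_of_le_one hq0.le hq1.le (Nat.le_self_pow two_ne_zero k)
  have e2 : ((k:ℝ)+1)^s ≤ ((k:ℝ)+1)^n := by
    rw [← Real.rpow_natCast ((k:ℝ)+1) n]
    exact Real.rpow_le_rpow_of_exponent_le hk1 (Nat.le_ceil s)
  calc Real.exp (-Real.pi * (k:ℝ)^2) * ((k:ℝ)+1)^s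
      ≤ q^k * ((k:ℝ)+1)^n := by
        apply mul_le_mul e1 e2 (by positivity) (by positivity)
    _ = ((k:ℝ)+1)^n * q^k := by ring

lemma aux_energy {d : ℕ} (μ : Measure (EuclideanSpace ℝ (Fin d)))
    (C' s T : ℝ) (hC' : 0 < C') (hs0 : 0 < s) (hT : 1 ≤ T)
    (hfrost : ∀ x : EuclideanSpace ℝ (Fin d), ∀ ρ : ℝ, 0 < ρ →
      μ (Metric.closedBall x ρ) ≤ ENNReal.ofReal (C' * ρ ^ s))
    (y : EuclideanSpace ℝ (Fin d)) :
    ∫⁻ z, ENNReal.ofReal (Real.exp (-(Real.pi * T^2) * ‖y - z‖^2)) ∂μ ≤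
      ENNReal.ofReal (C' * (∑' k : ℕ, Real.exp (-Real.pi * (k:ℝ)^2) * ((k:ℝ)+1)^s) * T^(-s)) := by
  have hT0 : (0:ℝ) < T := lt_of_lt_of_le one_pos hT
  have hsum := aux_summable s hs0.le
  have hptwise : ∀ z, ENNReal.ofReal (Real.exp (-(Real.pi * T^2) * ‖y - z‖^2)) ≤
      ∑' k : ℕ, (Metric.closedBall y (((k:ℝ)+1)/T)).indicator
        (fun _ => ENNReal.ofReal (Real.exp (-Real.pi * (k:ℝ)^2))) z := by
    intro z
    set u := ‖y - z‖ with hu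
    have hu0 : 0 ≤ u := norm_nonneg _
    set k := ⌊T*u⌋₊ with hk
    have hmem : z ∈ Metric.closedBall y (((k:ℝ)+1)/T) := by
      rw [Metric.mem_closedBall, dist_comm, dist_eq_norm]
      rw [le_div_iff₀ hT0]
      have := Nat.lt_floor_add_one (T*u)
      rw [← hu]
      nlinarith
    have hval : ENNReal.ofReal (Real.exp (-(Real.pi * T^2) * u^2)) ≤
        ENNReal.ofReal (Real.exp (-Real.pi * (k:ℝ)^2)) := by
      apply ENNReal.ofReal_le_ofReal
      apply Real.exp_le_exp.2
      have hfl : (k:ℝ) ≤ T*u := Nat.floor_le (by positivity)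
      have h2 : ((k:ℝ))^2 ≤ (T*u)^2 := by nlinarith [Nat.cast_nonneg (α := ℝ) k]
      nlinarith [Real.pi_pos]
    calc ENNReal.ofReal (Real.exp (-(Real.pi * T^2) * u^2))
        ≤ (Metric.closedBall y (((k:ℝ)+1)/T)).indicator
          (fun _ => ENNReal.ofReal (Real.exp (-Real.pi * (k:ℝ)^2))) z := by
          rw [Set.indicator_of_mem hmem]; exact hval
      _ ≤ _ := ENNReal.le_tsum k
  calc ∫⁻ z, ENNReal.ofReal (Real.exp (-(Real.pi * T^2) * ‖y - z‖^2)) ∂μ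
      ≤ ∫⁻ z, ∑' k : ℕ, (Metric.closedBall y (((k:ℝ)+1)/T)).indicator
          (fun _ => ENNReal.ofReal (Real.exp (-Real.pi * (k:ℝ)^2))) z ∂μ :=
        lintegral_mono hptwise
    _ = ∑' k : ℕ, ∫⁻ z, (Metric.closedBall y (((k:ℝ)+1)/T)).indicator
          (fun _ => ENNReal.ofReal (Real.exp (-Real.pi * (k:ℝ)^2))) z ∂μ :=
        lintegral_tsum (fun k => (measurable_const.indicator Metric.isClosed_closedBall.measurableSet).aemeasurable)
    _ = ∑' k : ℕ, ENNReal.ofReal (Real.exp (-Real.pi * (k:ℝ)^2)) *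
          μ (Metric.closedBall y (((k:ℝ)+1)/T)) := by
        congr 1; funext k
        rw [lintegral_indicator_const Metric.isClosed_closedBall.measurableSet]
    _ ≤ ∑' k : ℕ, ENNReal.ofReal (Real.exp (-Real.pi * (k:ℝ)^2)) *
          ENNReal.ofReal (C' * (((k:ℝ)+1)/T) ^ s) := by
        refine ENNReal.tsum_le_tsum (fun k => ?_)
        refine mul_le_mul_right (hfrost y _ (by positivity)) _
    _ = ∑' k : ℕ, ENNReal.ofReal ((C' * T^(-s)) * (Real.exp (-Real.pi * (k:ℝ)^2) * ((k:ℝ)+1)^s)) := by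
        congr 1; funext k
        rw [← ENNReal.ofReal_mul (Real.exp_pos _).le]
        congr 1
        rw [Real.div_rpow (by positivity) hT0.le, Real.rpow_neg hT0.le]
        field_simp
    _ = ENNReal.ofReal (∑' k : ℕ, (C' * T^(-s)) * (Real.exp (-Real.pi * (k:ℝ)^2) * ((k:ℝ)+1)^s)) :=
        (ENNReal.ofReal_tsum_of_nonneg (fun k => by positivity) (hsum.mul_left _)).symm
    _ = ENNReal.ofReal (C' * (∑' k : ℕ, Real.exp (-Real.pi * (k:ℝ)^2) * ((k:ℝ)+1)^s) * T^(-s)) := by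
        rw [tsum_mul_left]
        congr 1
        ring

lemma aux_gauss_int {d : ℕ} (b : ℝ) (hb0 : 0 < b) :
    Integrable (fun x : EuclideanSpace ℝ (Fin d) => Real.exp (-b * ‖x‖^2))
      (volume : Measure (EuclideanSpace ℝ (Fin d))) := by
  have hbc : (0:ℝ) < ((b:ℂ)).re := by simpa using hb0
  have h := (GaussianFourier.integrable_cexp_neg_mul_sq_norm_add (V := EuclideanSpace ℝ (Fin d))
    (b := (b:ℂ)) hbc 0 0).norm
  refine h.congr (Filter.Eventually.of_forall fun v => ?_)
  have h1 : (-(b:ℂ) * (‖v‖:ℂ)^2 + 0 * ((⟪(0 : EuclideanSpace ℝ (Fin d)), v⟫ : ℝ) : ℂ))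
      = ((-b * ‖v‖^2 : ℝ) : ℂ) := by push_cast; ring
  show ‖Complex.exp (-(b:ℂ) * (‖v‖:ℂ)^2 + 0 * ((⟪(0 : EuclideanSpace ℝ (Fin d)), v⟫ : ℝ) : ℂ))‖ = Real.exp (-b * ‖v‖^2)
  rw [h1, Complex.norm_exp_ofReal]

lemma aux_ft_cont {d : ℕ} (μ : Measure (EuclideanSpace ℝ (Fin d))) [IsFiniteMeasure μ] :
    Continuous (ftMeasure μ) := by
  have h : Continuous fun ξ : EuclideanSpace ℝ (Fin d) =>
      ∫ x, Complex.exp (-2 * Real.pi * Complex.I * ((⟪x, ξ⟫ : ℝ) : ℂ)) ∂μ := by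
    apply continuous_of_dominated (bound := fun _ => (1:ℝ))
    · intro ξ
      exact (Complex.continuous_exp.comp (continuous_const.mul
        (Complex.continuous_ofReal.comp (continuous_id.inner continuous_const)))).aestronglyMeasurable
    · intro ξ
      filter_upwards with x
      exact le_of_eq (aux_norm_exp _)
    · exact integrable_const 1
    · filter_upwards with x
      exact Complex.continuous_exp.comp (continuous_const.mul
        (Complex.continuous_ofReal.comp (continuous_const.inner continuous_id)))
  exact h

lemma aux_ft_bound {d : ℕ} (μ : Measure (EuclideanSpace ℝ (Fin d))) [IsFiniteMeasure μ]
    (ξ : EuclideanSpace ℝ (Fin d)) : ‖ftMeasure μ ξ‖ ≤ (μ Set.univ).toReal := by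
  rw [ftMeasure]
  refine le_trans (norm_integral_le_integral_norm _) ?_
  calc ∫ x, ‖Complex.exp (-2 * Real.pi * Complex.I * ((⟪x, ξ⟫ : ℝ) : ℂ))‖ ∂μ
      = ∫ _x, (1:ℝ) ∂μ := by congr 1; funext x; exact aux_norm_exp _
    _ ≤ (μ Set.univ).toReal := le_of_eq (by simp [measureReal_def])

set_option maxHeartbeats 2000000 in
theorem stmt_8 (d : ℕ) (hd : 2 ≤ d) (μ : Measure (EuclideanSpace ℝ (Fin d)))
    [IsFiniteMeasure μ]
    (hμc : ∃ K : Set (EuclideanSpace ℝ (Fin d)), IsCompact K ∧ μ Kᶜ = 0)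
    (C s : ℝ) (hC : 0 < C) (hs : d / 2 < s) (hsd : s < d)
    (hfrost : ∀ x : EuclideanSpace ℝ (Fin d), ∀ r : ℝ, 0 < r → r ≤ 1 →
      μ (Metric.closedBall x r) ≤ ENNReal.ofReal (C * r ^ s))
    (r R : ℝ) (hr : 0 < r) (hrR : r ≤ R) :
    ∃ K : ℝ, 0 < K ∧ ∀ t : ℝ, 1 ≤ t →
      ∫ x in {x : EuclideanSpace ℝ (Fin d) | ‖x‖ ∈ Set.Icc (t * r) (t * R)},
        ‖ftMeasure μ x‖ ^ 2 ≤ K * t ^ (d - s) := by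
  have hd2 : (2:ℝ) ≤ (d:ℝ) := by exact_mod_cast hd
  have hs0 : (0:ℝ) < s := lt_trans (by linarith : (0:ℝ) < (d:ℝ)/2) hs
  set A := (μ Set.univ).toReal with hAdef
  have hA0 : (0:ℝ) ≤ A := ENNReal.toReal_nonneg
  set C' := C + A with hC'def
  have hC'0 : 0 < C' := by linarith
  have hfrost' : ∀ x : EuclideanSpace ℝ (Fin d), ∀ ρ : ℝ, 0 < ρ →
      μ (Metric.closedBall x ρ) ≤ ENNReal.ofReal (C' * ρ ^ s) := by
    intro x ρ hρ
    by_cases hρ1 : ρ ≤ 1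
    · refine le_trans (hfrost x ρ hρ hρ1) (ENNReal.ofReal_le_ofReal ?_)
      have := Real.rpow_nonneg hρ.le s
      nlinarith
    · push_neg at hρ1
      have h1 : μ (Metric.closedBall x ρ) ≤ μ Set.univ := measure_mono (Set.subset_univ _)
      have h2 : μ Set.univ = ENNReal.ofReal A := (ENNReal.ofReal_toReal (measure_ne_top μ _)).symm
      rw [h2] at h1
      refine le_trans h1 (ENNReal.ofReal_le_ofReal ?_)
      have hρs : (1:ℝ) ≤ ρ^s := Real.one_le_rpow hρ1.le hs0.le
      nlinarith
  set S := ∑' k : ℕ, Real.exp (-Real.pi * (k:ℝ)^2) * ((k:ℝ)+1)^s with hSdef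
  have hsum := aux_summable s hs0.le
  have hS1 : (1:ℝ) ≤ S := by
    calc (1:ℝ) = Real.exp (-Real.pi * ((0:ℕ):ℝ)^2) * (((0:ℕ):ℝ)+1)^s := by
          simp
      _ ≤ S := Summable.le_tsum hsum 0 (fun i _ => by positivity)
  set M := max R 1 with hMdef
  have hM1 : (1:ℝ) ≤ M := le_max_right _ _
  have hRM : R ≤ M := le_max_left _ _
  have hKpos : (0:ℝ) < Real.exp Real.pi * (C' * S * A) * M ^ ((d:ℝ) - s) + 1 := by
    have h1 : (0:ℝ) ≤ Real.exp Real.pi * (C' * S * A) * M ^ ((d:ℝ) - s) :=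
      mul_nonneg (mul_nonneg (Real.exp_pos _).le
        (mul_nonneg (mul_nonneg hC'0.le (le_trans zero_le_one hS1)) hA0))
        (Real.rpow_nonneg (le_trans zero_le_one hM1) _)
    linarith
  refine ⟨Real.exp Real.pi * (C' * S * A) * M ^ ((d:ℝ) - s) + 1, hKpos, ?_⟩
  intro t ht
  have ht0 : (0:ℝ) < t := lt_of_lt_of_le one_pos ht
  set T := t * M with hTdef
  have hT1 : (1:ℝ) ≤ T := by nlinarith
  have hT0 : (0:ℝ) < T := by nlinarith
  set g : EuclideanSpace ℝ (Fin d) → ℝ := fun x => Real.exp (-(Real.pi/T^2) * ‖x‖^2) with hgdef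
  have hg_cont : Continuous g :=
    Real.continuous_exp.comp (continuous_const.mul ((continuous_norm).pow 2))
  have hg_int : Integrable g (volume : Measure (EuclideanSpace ℝ (Fin d))) :=
    aux_gauss_int (Real.pi/T^2) (by positivity)
  have hft_cont := aux_ft_cont μ
  have hft_bound := aux_ft_bound μ
  have hnsq : ∀ x : EuclideanSpace ℝ (Fin d), ‖‖ftMeasure μ x‖^2‖ ≤ A^2 := by
    intro x
    rw [Real.norm_eq_abs, abs_of_nonneg (by positivity)]
    exact pow_le_pow_left₀ (norm_nonneg _) (hft_bound x) 2
  have hgf_int : Integrable (fun x => g x * ‖ftMeasure μ x‖^2)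
      (volume : Measure (EuclideanSpace ℝ (Fin d))) := by
    have h := Integrable.bdd_mul (f := fun x => ‖ftMeasure μ x‖^2) (g := g) (c := A^2)
      hg_int ((hft_cont.norm.pow 2).aestronglyMeasurable)
      (Filter.Eventually.of_forall hnsq)
    exact h.congr (Filter.Eventually.of_forall fun x => by ring)
  set F := fun p : EuclideanSpace ℝ (Fin d) × EuclideanSpace ℝ (Fin d) =>
    Real.exp (-(Real.pi*T^2) * ‖p.1-p.2‖^2) with hFdef
  have hF_cont : Continuous F :=
    Real.continuous_exp.comp (continuous_const.mul (((continuous_fst.sub continuous_snd).norm).pow 2))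
  have hFle : ∫ p, F p ∂(μ.prod μ) ≤ C' * S * T^(-s) * A := by
    have hnn : 0 ≤ᵐ[μ.prod μ] F := Filter.Eventually.of_forall fun p => (Real.exp_pos _).le
    rw [integral_eq_lintegral_of_nonneg_ae hnn hF_cont.aestronglyMeasurable]
    apply ENNReal.toReal_le_of_le_ofReal
    · have h1 : (0:ℝ) ≤ T^(-s) := Real.rpow_nonneg hT0.le _
      have h2 : (0:ℝ) ≤ C' * S := mul_nonneg hC'0.le (le_trans zero_le_one hS1)
      exact mul_nonneg (mul_nonneg h2 h1) hA0
    have hmeas : Measurable fun p : EuclideanSpace ℝ (Fin d) × EuclideanSpace ℝ (Fin d) =>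
        ENNReal.ofReal (F p) := hF_cont.measurable.ennreal_ofReal
    calc ∫⁻ p, ENNReal.ofReal (F p) ∂(μ.prod μ)
        = ∫⁻ y, ∫⁻ z, ENNReal.ofReal (F (y, z)) ∂μ ∂μ := lintegral_prod _ hmeas.aemeasurable
      _ ≤ ∫⁻ _y, ENNReal.ofReal (C' * S * T^(-s)) ∂μ :=
          lintegral_mono fun y => aux_energy μ C' s T hC'0 hs0 hT1 hfrost' y
      _ = ENNReal.ofReal (C' * S * T^(-s)) * μ Set.univ := by rw [lintegral_const]
      _ = ENNReal.ofReal (C' * S * T^(-s)) * ENNReal.ofReal A := by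
          rw [← ENNReal.ofReal_toReal (measure_ne_top μ Set.univ)]
      _ = ENNReal.ofReal (C' * S * T^(-s) * A) := by
          rw [← ENNReal.ofReal_mul (mul_nonneg
            (mul_nonneg hC'0.le (le_trans zero_le_one hS1)) (Real.rpow_nonneg hT0.le _))]
  set St := {x : EuclideanSpace ℝ (Fin d) | ‖x‖ ∈ Set.Icc (t*r) (t*R)} with hStdef
  have hSt_meas : MeasurableSet St := measurable_norm measurableSet_Icc
  have hSt_sub : St ⊆ Metric.closedBall 0 T := by
    intro x hx
    rw [Metric.mem_closedBall, dist_zero_right]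
    have h1 : ‖x‖ ≤ t*R := hx.2
    have h2 : t*R ≤ T := by rw [hTdef]; nlinarith
    linarith
  have hInt1 : IntegrableOn (fun x => ‖ftMeasure μ x‖^2) St volume := by
    have hvol : volume St < ⊤ :=
      lt_of_le_of_lt (measure_mono hSt_sub) (isCompact_closedBall 0 T).measure_lt_top
    have hconst : IntegrableOn (fun _ : EuclideanSpace ℝ (Fin d) => A^2) St volume :=
      integrableOn_const hvol.ne
    exact Integrable.mono' hconst ((hft_cont.norm.pow 2).aestronglyMeasurable.restrict)
      (Filter.Eventually.of_forall hnsq)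
  have hpt : ∀ x ∈ St, ‖ftMeasure μ x‖^2 ≤ Real.exp Real.pi * (g x * ‖ftMeasure μ x‖^2) := by
    intro x hx
    have hxT : ‖x‖ ≤ T := by
      have := hSt_sub hx; rwa [Metric.mem_closedBall, dist_zero_right] at this
    have h1 : (1:ℝ) ≤ Real.exp Real.pi * g x := by
      rw [hgdef]
      simp only
      rw [← Real.exp_add]
      apply Real.one_le_exp
      have h2 : ‖x‖^2 ≤ T^2 := by nlinarith [norm_nonneg x]
      have h3 : Real.pi/T^2 * ‖x‖^2 ≤ Real.pi := by
        rw [div_mul_eq_mul_div, div_le_iff₀ (by positivity)]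
        nlinarith [Real.pi_pos]
      linarith
    calc ‖ftMeasure μ x‖^2 = 1 * ‖ftMeasure μ x‖^2 := (one_mul _).symm
      _ ≤ (Real.exp Real.pi * g x) * ‖ftMeasure μ x‖^2 :=
          mul_le_mul_of_nonneg_right h1 (by positivity)
      _ = Real.exp Real.pi * (g x * ‖ftMeasure μ x‖^2) := by ring
  have hchain : ∫ x in St, ‖ftMeasure μ x‖^2 ≤
      Real.exp Real.pi * (T ^ ((d:ℝ)) * ∫ p, F p ∂(μ.prod μ)) := by
    calc ∫ x in St, ‖ftMeasure μ x‖^2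
        ≤ ∫ x in St, Real.exp Real.pi * (g x * ‖ftMeasure μ x‖^2) :=
          setIntegral_mono_on hInt1 ((hgf_int.const_mul _).integrableOn) hSt_meas hpt
      _ ≤ ∫ x, Real.exp Real.pi * (g x * ‖ftMeasure μ x‖^2) :=
          setIntegral_le_integral (hgf_int.const_mul _)
            (Filter.Eventually.of_forall fun x => by positivity)
      _ = Real.exp Real.pi * ∫ x, g x * ‖ftMeasure μ x‖^2 := integral_const_mul _ _
      _ = Real.exp Real.pi * (T ^ ((d:ℝ)) * ∫ p, F p ∂(μ.prod μ)) := by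
          simp only [hgdef, hFdef]
          rw [aux_key μ T hT0]
  have hTpow : T ^ ((d:ℝ)) * T^(-s) = t^((d:ℝ)-s) * M^((d:ℝ)-s) := by
    rw [← Real.rpow_add hT0, ← sub_eq_add_neg, hTdef,
      Real.mul_rpow ht0.le (le_trans zero_le_one hM1)]
  refine le_trans hchain ?_
  have hF0 : 0 ≤ ∫ p, F p ∂(μ.prod μ) := integral_nonneg fun p => (Real.exp_pos _).le
  calc Real.exp Real.pi * (T ^ ((d:ℝ)) * ∫ p, F p ∂(μ.prod μ))
      ≤ Real.exp Real.pi * (T ^ ((d:ℝ)) * (C' * S * T^(-s) * A)) := by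
        apply mul_le_mul_of_nonneg_left _ (Real.exp_pos _).le
        exact mul_le_mul_of_nonneg_left hFle (Real.rpow_nonneg hT0.le _)
    _ = (Real.exp Real.pi * (C' * S * A) * M^((d:ℝ)-s)) * t^((d:ℝ)-s) := by
        rw [show T ^ ((d:ℝ)) * (C' * S * T^(-s) * A) =
          (T ^ ((d:ℝ)) * T^(-s)) * (C' * S * A) by ring, hTpow]
        ring
    _ ≤ (Real.exp Real.pi * (C' * S * A) * M^((d:ℝ)-s) + 1) * t^((d:ℝ)-s) := by
        apply mul_le_mul_of_nonneg_right (by linarith) (Real.rpow_nonneg ht0.le _)
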